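/- Let n > 1 and let d(x) = ∏_{m | n, μ(m) = -1} δ(m)Φ_m(x), where the product is over divisors m of n with μ(m) = -1. Then modulo x^(r+1), d(x) ≡ ∏_{d ≤ r} (1 - x^d)^(k(d)), where k(d) = Σ_{m | n, μ(m) = -1, d | m} μ(m/d); moreover k(1) = -2^(ν(n)-1) and |k(d)| ≤ 2^(ν(n)-1) for all d. -/

import Mathlib

open PowerSeries ArithmeticFunction

/-- Integer power of a power series over `ℚ`, with negative exponents interpreted via the
power series inverse. -/
noncomputable def zp (f : PowerSeries ℚ) (k : ℤ) : PowerSeries ℚ :=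
  if 0 ≤ k then f ^ k.toNat else (f ^ (-k).toNat)⁻¹

/-- `δ m = -1` if `m = 1` and `1` otherwise. -/
def delta (m : ℕ) : ℤ := if m = 1 then -1 else 1

section Aux

/-- the power series `δ(m) Φ_m`. -/
noncomputable def dcyc (m : ℕ) : PowerSeries ℚ :=
  ((Polynomial.C (delta m : ℚ) * Polynomial.cyclotomic m ℚ : Polynomial ℚ) : PowerSeries ℚ)

lemma constantCoeff_dcyc (m : ℕ) : constantCoeff (dcyc m) = 1 := by
  rcases eq_or_ne m 0 with rfl | h0
  · simp [dcyc, delta]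
  rcases eq_or_ne m 1 with rfl | h1
  · simp [dcyc, delta, Polynomial.cyclotomic_one]
  · have h2 : 1 < m := by omega
    simp [dcyc, delta, h1, Polynomial.cyclotomic_coeff_zero ℚ h2]

/-- The unit of a power series with nonzero constant coefficient. -/
noncomputable def unitOf (f : PowerSeries ℚ) (h : constantCoeff f ≠ 0) : (PowerSeries ℚ)ˣ :=
  ⟨f, f⁻¹, PowerSeries.mul_inv_cancel f h, PowerSeries.inv_mul_cancel f h⟩

@[simp] lemma unitOf_val (f : PowerSeries ℚ) (h) : (unitOf f h).val = f := rfl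

lemma constantCoeff_unit_ne (u : (PowerSeries ℚ)ˣ) : constantCoeff u.val ≠ 0 := by
  have := Units.ne_zero (Units.map (constantCoeff (R := ℚ)).toMonoidHom u)
  simpa using this

lemma val_inv_unit (u : (PowerSeries ℚ)ˣ) : (u.val)⁻¹ = ((u⁻¹ : (PowerSeries ℚ)ˣ) : PowerSeries ℚ) := by
  rw [PowerSeries.inv_eq_iff_mul_eq_one (constantCoeff_unit_ne u)]
  rw [← Units.val_mul, inv_mul_cancel, Units.val_one]

lemma zp_unit (u : (PowerSeries ℚ)ˣ) (t : ℤ) :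
    zp u.val t = ((u ^ t : (PowerSeries ℚ)ˣ) : PowerSeries ℚ) := by
  rcases le_or_gt 0 t with h | h
  · lift t to ℕ using h
    simp [zp, zpow_natCast, Units.val_pow_eq_pow_val]
  · rw [zp, if_neg (by omega)]
    have ht : u ^ t = (u ^ (-t).toNat)⁻¹ := by
      rw [← zpow_natCast, Int.toNat_of_nonneg (by omega), ← zpow_neg, neg_neg]
    rw [ht, ← val_inv_unit, Units.val_pow_eq_pow_val]

/-- The unit `1 - X^j` (junk value `1` at `j = 0`). -/
noncomputable def uX (j : ℕ) : (PowerSeries ℚ)ˣ :=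
  if h : j = 0 then 1 else
    unitOf (1 - (PowerSeries.X : PowerSeries ℚ) ^ j)
      (by
        have : constantCoeff ((PowerSeries.X : PowerSeries ℚ) ^ j) = 0 := by
          rw [map_pow, PowerSeries.constantCoeff_X, zero_pow h]
        simp [this])

lemma uX_val {j : ℕ} (h : j ≠ 0) :
    (uX j).val = 1 - (PowerSeries.X : PowerSeries ℚ) ^ j := by
  rw [uX, dif_neg h, unitOf_val]

/-- congruence modulo `X^(r+1)` to 1 -/
def cong (r : ℕ) (f : PowerSeries ℚ) : Prop :=
  (PowerSeries.X : PowerSeries ℚ) ^ (r + 1) ∣ (f - 1)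

lemma cong_one (r : ℕ) : cong r 1 := by simp [cong]

lemma cong_mul {r : ℕ} {f g : PowerSeries ℚ} (hf : cong r f) (hg : cong r g) :
    cong r (f * g) := by
  have : f * g - 1 = f * (g - 1) + (f - 1) := by ring
  rw [cong, this]
  exact dvd_add (hg.mul_left f) hf

lemma cong_inv {r : ℕ} (u : (PowerSeries ℚ)ˣ) (hu : cong r u.val) :
    cong r ((u⁻¹ : (PowerSeries ℚ)ˣ) : PowerSeries ℚ) := by
  have : ((u⁻¹ : (PowerSeries ℚ)ˣ) : PowerSeries ℚ) - 1 =
      ((u⁻¹ : (PowerSeries ℚ)ˣ) : PowerSeries ℚ) * (1 - u.val) := by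
    rw [mul_sub, mul_one, ← Units.val_mul, inv_mul_cancel, Units.val_one]
  have h2 : (PowerSeries.X : PowerSeries ℚ) ^ (r + 1) ∣ (1 - u.val) := by
    rw [← neg_sub]; exact dvd_neg.mpr hu
  rw [cong, this]
  exact h2.mul_left _

lemma cong_pow {r : ℕ} (u : (PowerSeries ℚ)ˣ) (hu : cong r u.val) (m : ℕ) :
    cong r ((u ^ m : (PowerSeries ℚ)ˣ) : PowerSeries ℚ) := by
  induction m with
  | zero => simpa using cong_one r
  | succ m ih =>
      rw [pow_succ, Units.val_mul]
      exact cong_mul ih hu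

lemma cong_zpow {r : ℕ} (u : (PowerSeries ℚ)ˣ) (hu : cong r u.val) (t : ℤ) :
    cong r ((u ^ t : (PowerSeries ℚ)ˣ) : PowerSeries ℚ) := by
  rcases le_or_gt 0 t with h | h
  · rw [← Int.toNat_of_nonneg h, zpow_natCast]
    exact cong_pow u hu _
  · have ht : u ^ t = (u ^ (-t).toNat)⁻¹ := by
      rw [← zpow_natCast, Int.toNat_of_nonneg (by omega)]
      simp
    rw [ht]
    exact cong_inv _ (cong_pow u hu _)

lemma cong_prod {r : ℕ} {ι : Type*} (s : Finset ι) (f : ι → PowerSeries ℚ)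
    (hf : ∀ i ∈ s, cong r (f i)) : cong r (∏ i ∈ s, f i) := by
  classical
  induction s using Finset.induction_on with
  | empty => simpa using cong_one r
  | insert _ _ hx ih =>
      rw [Finset.prod_insert hx]
      exact cong_mul (hf _ (Finset.mem_insert_self _ _))
        (ih fun i hi => hf i (Finset.mem_insert_of_mem hi))

lemma coeff_mul_cong {r i : ℕ} (hi : i ≤ r) {f g : PowerSeries ℚ} (hg : cong r g) :
    PowerSeries.coeff i (f * g) = PowerSeries.coeff i f := by
  have h : (PowerSeries.X : PowerSeries ℚ) ^ (r + 1) ∣ (f * g - f) := by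
    have : f * g - f = f * (g - 1) := by ring
    rw [this]
    exact hg.mul_left f
  have h0 : PowerSeries.coeff i (f * g - f) = 0 :=
    PowerSeries.X_pow_dvd_iff.mp h i (by omega)
  rw [map_sub] at h0
  linarith

lemma pow_sum_int {G : Type*} [CommGroup G] {ι : Type*} (s : Finset ι) (a : G) (f : ι → ℤ) :
    ∏ i ∈ s, a ^ f i = a ^ (∑ i ∈ s, f i) := by
  classical
  induction s using Finset.induction_on with
  | empty => simp
  | insert _ _ hx ih => rw [Finset.prod_insert hx, Finset.sum_insert hx, ih, ← zpow_add]

lemma prod_delta_divisors {m : ℕ} (hm : 0 < m) :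
    ∏ d ∈ m.divisors, ((delta d : ℚ)) = -1 := by
  have h1 : (1 : ℕ) ∈ m.divisors := Nat.one_mem_divisors.2 hm.ne'
  rw [← Finset.prod_erase_mul _ _ h1]
  have : ∀ d ∈ m.divisors.erase 1, ((delta d : ℚ)) = 1 := by
    intro d hd
    have : d ≠ 1 := Finset.ne_of_mem_erase hd
    simp [delta, this]
  rw [Finset.prod_congr rfl this]
  simp [delta]

end Aux

set_option maxHeartbeats 1000000 in
/-- For `n > 1`, the divisor `d(x) = ∏_{m ∣ n, μ(m) = -1} δ(m)Φ_m(x)` of `x^n - 1`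
satisfies, modulo `x^(r+1)`, `d(x) ≡ ∏_{j ≤ r} (1-x^j)^(k j)` where
`k j = ∑_{m ∣ n, μ(m) = -1, j ∣ m} μ(m/j)`; moreover `k 1 = -2^(ν(n)-1)` and
`|k j| ≤ 2^(ν(n)-1)`. -/
theorem divisor_congr_and_exponent_bounds (n r : ℕ) (hn : 1 < n) (k : ℕ → ℤ)
    (hk : ∀ j, k j = ∑ m ∈ n.divisors.filter (fun m => moebius m = -1 ∧ j ∣ m),
      moebius (m / j)) :
    (∀ i ≤ r,
      ((∏ m ∈ n.divisors.filter (fun m => moebius m = -1),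
          (Polynomial.C (delta m : ℚ) * Polynomial.cyclotomic m ℚ) : Polynomial ℚ) :
        PowerSeries ℚ).coeff i =
      (∏ j ∈ Finset.Icc 1 r, zp (1 - (PowerSeries.X : PowerSeries ℚ) ^ j) (k j)).coeff i) ∧
    k 1 = -2 ^ (n.primeFactors.card - 1) ∧
    ∀ j, |k j| ≤ 2 ^ (n.primeFactors.card - 1) := by
  classical
  have hn0 : n ≠ 0 := by omega
  -- the unit-valued function `F m = δ m Φ_m`
  set F : ℕ → (PowerSeries ℚ)ˣ := fun m =>
    unitOf (dcyc m) (by rw [constantCoeff_dcyc]; exact one_ne_zero) with hF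
  -- Step 1: `∏_{d ∣ m} F d = 1 - X^m` for `m > 0`.
  have key : ∀ m > 0, ∏ d ∈ m.divisors, F d = uX m := by
    intro m hm
    have hpoly : ∏ d ∈ m.divisors, (Polynomial.C (delta d : ℚ) * Polynomial.cyclotomic d ℚ) =
        1 - Polynomial.X ^ m := by
      rw [Finset.prod_mul_distrib, Polynomial.prod_cyclotomic_eq_X_pow_sub_one hm,
        ← map_prod (Polynomial.C : ℚ →+* Polynomial ℚ) _ m.divisors, prod_delta_divisors hm]
      simp only [map_neg, map_one]
      ring
    ext1
    rw [← Units.coeHom_apply, map_prod]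
    simp only [Units.coeHom_apply, hF, unitOf_val, dcyc,
      ← Polynomial.coeToPowerSeries.ringHom_apply]
    rw [← map_prod, hpoly, uX_val hm.ne']
    simp [map_sub, map_one, map_pow, Polynomial.coeToPowerSeries.ringHom_apply,
      Polynomial.coe_X]
  -- Step 2: Möbius inversion
  have inv : ∀ m > 0, ∏ x ∈ m.divisorsAntidiagonal, uX x.snd ^ (moebius x.fst) = F m :=
    (prod_eq_iff_prod_pow_moebius_eq).mp key
  set S : Finset ℕ := n.divisors.filter (fun m => moebius m = -1) with hS
  -- Step 3: rearrange the double product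
  have hU : ∏ m ∈ S, F m = ∏ d ∈ n.divisors, uX d ^ (k d) := by
    calc ∏ m ∈ S, F m
        = ∏ m ∈ S, ∏ d ∈ m.divisors, uX d ^ (moebius (m / d)) := by
          refine Finset.prod_congr rfl fun m hm => ?_
          have hm0 : 0 < m := Nat.pos_of_mem_divisors (Finset.mem_filter.mp hm).1
          rw [← inv m hm0, Nat.prod_divisorsAntidiagonal' (f := fun a b => uX b ^ (moebius a))]
      _ = ∏ d ∈ n.divisors, ∏ m ∈ n.divisors.filter (fun m => moebius m = -1 ∧ d ∣ m),
            uX d ^ (moebius (m / d)) := by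
          refine Finset.prod_comm' fun m d => ?_
          simp only [hS, Finset.mem_filter, Nat.mem_divisors]
          constructor
          · rintro ⟨⟨⟨hmn, _⟩, hμ⟩, hdm, hm0⟩
            exact ⟨⟨⟨hmn, hn0⟩, hμ, hdm⟩, hdm.trans hmn, hn0⟩
          · rintro ⟨⟨⟨hmn, _⟩, hμ, hdm⟩, _, _⟩
            have hm0 : m ≠ 0 := by
              rintro rfl; exact hn0 (Nat.eq_zero_of_zero_dvd hmn)
            exact ⟨⟨⟨hmn, hn0⟩, hμ⟩, hdm, hm0⟩
      _ = ∏ d ∈ n.divisors, uX d ^ (k d) := by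
          refine Finset.prod_congr rfl fun d hd => ?_
          rw [pow_sum_int, ← hk d]
  -- value identities
  have hLHS : ((∏ m ∈ S,
        (Polynomial.C (delta m : ℚ) * Polynomial.cyclotomic m ℚ) : Polynomial ℚ) :
      PowerSeries ℚ) =
      ((∏ d ∈ n.divisors, uX d ^ (k d) : (PowerSeries ℚ)ˣ) : PowerSeries ℚ) := by
    rw [← hU, ← Units.coeHom_apply, map_prod]
    simp only [Units.coeHom_apply, hF, unitOf_val, dcyc,
      ← Polynomial.coeToPowerSeries.ringHom_apply]
    rw [← map_prod]
  have hRHS : ∏ j ∈ Finset.Icc 1 r, zp (1 - (PowerSeries.X : PowerSeries ℚ) ^ j) (k j) =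
      ((∏ j ∈ Finset.Icc 1 r, uX j ^ (k j) : (PowerSeries ℚ)ˣ) : PowerSeries ℚ) := by
    rw [← Units.coeHom_apply, map_prod]
    refine Finset.prod_congr rfl fun j hj => ?_
    have hj1 : j ≠ 0 := by have := (Finset.mem_Icc.mp hj).1; omega
    rw [← uX_val hj1, zp_unit, Units.coeHom_apply]
  -- index-set juggling
  have hBA : ∏ j ∈ Finset.Icc 1 r, uX j ^ (k j) =
      ∏ j ∈ Finset.Icc 1 r ∩ n.divisors, uX j ^ (k j) := by
    refine (Finset.prod_subset Finset.inter_subset_left fun j hj hj' => ?_).symm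
    have hjd : j ∉ n.divisors := fun h => hj' (Finset.mem_inter.mpr ⟨hj, h⟩)
    have hkj : k j = 0 := by
      rw [hk]
      have he : n.divisors.filter (fun m => moebius m = -1 ∧ j ∣ m) = ∅ := by
        rw [Finset.filter_eq_empty_iff]
        rintro m hm ⟨-, hjm⟩
        exact hjd (Nat.mem_divisors.mpr ⟨hjm.trans (Nat.mem_divisors.mp hm).1, hn0⟩)
      rw [he, Finset.sum_empty]
    rw [hkj, zpow_zero]
  have hAB : ∏ d ∈ n.divisors, uX d ^ (k d) =
      (∏ j ∈ Finset.Icc 1 r ∩ n.divisors, uX j ^ (k j)) *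
        (∏ j ∈ n.divisors \ Finset.Icc 1 r, uX j ^ (k j)) := by
    rw [Finset.inter_comm, Finset.prod_inter_mul_prod_diff]
  have hg : cong r ((∏ j ∈ n.divisors \ Finset.Icc 1 r, uX j ^ (k j) :
      (PowerSeries ℚ)ˣ) : PowerSeries ℚ) := by
    rw [← Units.coeHom_apply, map_prod]
    refine cong_prod _ _ fun j hj => ?_
    obtain ⟨hjd, hjI⟩ := Finset.mem_sdiff.mp hj
    have hj0 : j ≠ 0 := (Nat.pos_of_mem_divisors hjd).ne'
    have hjr : r + 1 ≤ j := by
      by_contra hc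
      exact hjI (Finset.mem_Icc.mpr ⟨by omega, by omega⟩)
    refine cong_zpow _ ?_ _
    rw [cong, uX_val hj0]
    have he : (1 - (PowerSeries.X : PowerSeries ℚ) ^ j - 1) = -((PowerSeries.X : PowerSeries ℚ) ^ j) := by ring
    rw [he]
    exact dvd_neg.mpr (pow_dvd_pow _ hjr)
  -- counting: card of the μ = -1 divisors
  have hν : 1 ≤ n.primeFactors.card :=
    Finset.card_pos.mpr (Nat.nonempty_primeFactors.mpr hn)
  have hprimeF : (UniqueFactorizationMonoid.normalizedFactors n).toFinset = n.primeFactors := by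
    rw [Nat.factors_eq]
    simp
  have hsq : (n.divisors.filter Squarefree).card = 2 ^ n.primeFactors.card := by
    calc (n.divisors.filter Squarefree).card
        = ∑ d ∈ n.divisors.filter Squarefree, 1 := (Finset.card_eq_sum_ones _)
      _ = ∑ i ∈ (UniqueFactorizationMonoid.normalizedFactors n).toFinset.powerset, 1 :=
          Nat.sum_divisors_filter_squarefree hn0
      _ = 2 ^ n.primeFactors.card := by
          rw [← Finset.card_eq_sum_ones, Finset.card_powerset, hprimeF]
  have hsum : ∑ d ∈ n.divisors, moebius d = 0 := by
    have h := coe_mul_zeta_apply (f := (moebius : ArithmeticFunction ℤ)) (x := n)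
    rw [moebius_mul_coe_zeta, one_apply_ne (by omega : n ≠ 1)] at h
    exact h.symm
  set Tpos : Finset ℕ := n.divisors.filter (fun m => moebius m = 1) with hTpos
  have hfil : n.divisors.filter Squarefree =
      n.divisors.filter (fun m => moebius m = 1 ∨ moebius m = -1) := by
    refine Finset.filter_congr fun m _ => ?_
    simp [← moebius_ne_zero_iff_squarefree, moebius_ne_zero_iff_eq_or]
  have hcardsum : (n.divisors.filter Squarefree).card = Tpos.card + S.card := by
    rw [hfil, Finset.filter_or]
    refine Finset.card_union_of_disjoint ?_
    refine Finset.disjoint_left.mpr fun a ha hb => ?_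
    have h1 := (Finset.mem_filter.mp ha).2
    have h2 := (Finset.mem_filter.mp hb).2
    omega
  have hsum2 : ∑ d ∈ n.divisors, moebius d = (Tpos.card : ℤ) - (S.card : ℤ) := by
    rw [← Finset.sum_filter_add_sum_filter_not n.divisors (fun m => moebius m = 1)]
    have e1 : ∑ d ∈ Tpos, moebius d = (Tpos.card : ℤ) := by
      rw [Finset.sum_congr rfl (fun d hd => (Finset.mem_filter.mp hd).2)]
      simp [hTpos]
    have e2 : ∑ d ∈ n.divisors.filter (fun m => ¬ moebius m = 1), moebius d = -(S.card : ℤ) := by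
      rw [← Finset.sum_filter_add_sum_filter_not
        (n.divisors.filter (fun m => ¬ moebius m = 1)) (fun m => moebius m = -1)]
      have hfe : (n.divisors.filter (fun m => ¬ moebius m = 1)).filter
          (fun m => moebius m = -1) = S := by
        rw [Finset.filter_filter, hS]
        refine Finset.filter_congr fun m _ => ?_
        constructor
        · rintro ⟨-, h⟩; exact h
        · intro h; exact ⟨by omega, h⟩
      have hz : ∑ d ∈ (n.divisors.filter (fun m => ¬ moebius m = 1)).filter
          (fun m => ¬ moebius m = -1), moebius d = 0 := by
        refine Finset.sum_eq_zero fun d hd => ?_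
        have h1 := (Finset.mem_filter.mp (Finset.mem_filter.mp hd).1).2
        have h2 := (Finset.mem_filter.mp hd).2
        rcases moebius_eq_or d with h | h | h
        · exact h
        · exact absurd h h1
        · exact absurd h h2
      rw [hfe, hz, add_zero]
      rw [Finset.sum_congr rfl (fun d hd => (Finset.mem_filter.mp hd).2)]
      simp [hS]
    rw [e1, e2]
    ring
  have hScard : (S.card : ℤ) = 2 ^ (n.primeFactors.card - 1) := by
    have h2 : 2 ^ n.primeFactors.card = 2 * 2 ^ (n.primeFactors.card - 1) := by
      rw [← pow_succ']
      congr 1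
      omega
    have hpn : Tpos.card = S.card := by
      have := hsum2.symm.trans hsum
      omega
    have : S.card = 2 ^ (n.primeFactors.card - 1) := by omega
    rw [this]
    push_cast
    ring
  refine ⟨?_, ?_, ?_⟩
  · -- the congruence
    intro i hi
    rw [hLHS, hRHS, hBA, hAB, Units.val_mul]
    exact coeff_mul_cong hi hg
  · -- k 1
    have hfe : n.divisors.filter (fun m => moebius m = -1 ∧ 1 ∣ m) = S := by
      rw [hS]
      refine Finset.filter_congr fun m _ => ?_
      simp
    rw [hk, hfe]
    have : ∑ m ∈ S, moebius (m / 1) = ∑ m ∈ S, (-1 : ℤ) := by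
      refine Finset.sum_congr rfl fun m hm => ?_
      rw [Nat.div_one]
      exact (Finset.mem_filter.mp hm).2
    rw [this, Finset.sum_const, nsmul_eq_mul, mul_neg_one, hScard]
  · -- the bound
    intro j
    rw [hk]
    calc |∑ m ∈ n.divisors.filter (fun m => moebius m = -1 ∧ j ∣ m), moebius (m / j)|
        ≤ ∑ m ∈ n.divisors.filter (fun m => moebius m = -1 ∧ j ∣ m), |moebius (m / j)| :=
          Finset.abs_sum_le_sum_abs _ _
      _ ≤ ∑ m ∈ n.divisors.filter (fun m => moebius m = -1 ∧ j ∣ m), (1 : ℤ) := by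
          refine Finset.sum_le_sum fun m hm => ?_
          rw [abs_moebius]
          split_ifs <;> norm_num
      _ = ((n.divisors.filter (fun m => moebius m = -1 ∧ j ∣ m)).card : ℤ) := by
          rw [Finset.sum_const, nsmul_eq_mul, mul_one]
      _ ≤ (S.card : ℤ) := by
          have hsub : n.divisors.filter (fun m => moebius m = -1 ∧ j ∣ m) ⊆ S := by
            intro m hm
            obtain ⟨h1, h2, -⟩ := Finset.mem_filter.mp hm
            exact Finset.mem_filter.mpr ⟨h1, h2⟩
          exact_mod_cast Finset.card_le_card hsub
      _ = 2 ^ (n.primeFactors.card - 1) := hScard
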